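/- The infinite product over all integers n ≥ 2 of (1 - 1/(n(n+1))) equals -2 sin(πφ)/π, where φ = (1 + √5)/2. In particular it equals twice the product ∏_{n=2}^∞ (1 - 1/(n(n-1))). -/

import Mathlib

open Real

section QuadraticClassHostAux

open Filter Topology Finset

private lemma qchp_key_alg (a x S C : ℝ) (ha : a^2 = a+1) (hx0 : x ≠ 0) (hx1 : x + 1 ≠ 0) :
    S * (1 - a^2/x^2) * C * ((x+1-a)/(x+1)) = (S * C * ((x-a)/x)) * (1 - 1/(x*(x+1))) := by
  field_simp
  linear_combination (S*C*(a - x)) * ha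

private lemma qchp_closedP (a : ℝ) (ha : a^2 = a+1) (h1 : 1 < a) (h2 : a < 2) (N : ℕ) :
    ∏ k ∈ range N, (1 - 1/(((k:ℝ)+2)*((k:ℝ)+3))) =
      (∏ j ∈ range (N+1), (1 - a^2/((j:ℝ)+1)^2)) * (2/((1-a^2)*(2-a)))
        * (((N:ℝ)+2-a)/((N:ℝ)+2)) := by
  induction N with
  | zero =>
      simp only [range_zero, prod_empty, range_one, prod_range_succ, Nat.cast_zero]
      have h3 : 1 - a^2 ≠ 0 := by nlinarith
      have h4 : (2:ℝ) - a ≠ 0 := by linarith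
      field_simp
      ring
  | succ n ih =>
      rw [prod_range_succ, ih,
        prod_range_succ (fun j => (1 - a^2/((j:ℝ)+1)^2)) (n+1)]
      push_cast
      have := qchp_key_alg a ((n:ℝ)+2) (∏ j ∈ range (n+1), (1 - a^2/((j:ℝ)+1)^2))
        (2/((1-a^2)*(2-a))) ha (by positivity) (by positivity)
      linear_combination -this

private lemma qchp_closedQ (a : ℝ) (ha : a^2 = a+1) (h1 : 1 < a) (h2 : a < 2) (N : ℕ) :
    ∏ k ∈ range N, (1 - 1/(((k:ℝ)+2)*((k:ℝ)+1))) =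
      (∏ j ∈ range N, (1 - a^2/((j:ℝ)+1)^2)) * ((1+a)/(1-a^2))
        * (((N:ℝ)+1-a)/((N:ℝ)+1)) := by
  induction N with
  | zero =>
      have h3 : 1 - a^2 ≠ 0 := by nlinarith
      simp only [range_zero, prod_empty, Nat.cast_zero]
      field_simp
      ring
  | succ n ih =>
      rw [prod_range_succ, ih,
        prod_range_succ (fun j => (1 - a^2/((j:ℝ)+1)^2)) n]
      push_cast
      have := qchp_key_alg a ((n:ℝ)+1) (∏ j ∈ range n, (1 - a^2/((j:ℝ)+1)^2))
        ((1+a)/(1-a^2)) ha (by positivity) (by positivity)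
      linear_combination -this

private lemma qchp_log_summable (f : ℕ → ℝ) (hlb : ∀ n, 1/2 ≤ f n) (hub : ∀ n, f n ≤ 1)
    (hsum : Summable (fun n => 1 - f n)) : Summable fun n => Real.log (f n) := by
  have hpos : ∀ n, 0 < f n := fun n => lt_of_lt_of_le (by norm_num) (hlb n)
  apply Summable.of_abs
  refine Summable.of_nonneg_of_le (fun n => abs_nonneg _) (fun n => ?_) (hsum.mul_left 2)
  have h1 : Real.log (f n) ≤ 0 := Real.log_nonpos (by linarith [hlb n]) (hub n)
  rw [abs_of_nonpos h1]
  have h2 : Real.log (f n)⁻¹ ≤ (f n)⁻¹ - 1 :=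
    Real.log_le_sub_one_of_pos (inv_pos.mpr (hpos n))
  rw [Real.log_inv] at h2
  have h3 : (f n)⁻¹ - 1 ≤ 2 * (1 - f n) := by
    rw [inv_eq_one_div, div_sub' (ne_of_gt (hpos n)), div_le_iff₀ (hpos n)]
    nlinarith [hlb n, hub n]
  linarith

private lemma qchp_base_summable : Summable fun n : ℕ => 1/(((n:ℝ)+1)^2) := by
  have := (_root_.summable_nat_add_iff (f := fun n : ℕ => 1/((n:ℝ)^2)) 1).mpr
    (summable_one_div_nat_pow.mpr one_lt_two)
  simpa using this

private lemma qchp_tendsto_ratio (a c : ℝ) (hc : 0 < c) :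
    Tendsto (fun N : ℕ => ((N:ℝ)+c-a)/((N:ℝ)+c)) atTop (𝓝 1) := by
  have h1 : Tendsto (fun N : ℕ => ((N:ℝ)+c)) atTop atTop :=
    tendsto_atTop_add_const_right atTop c tendsto_natCast_atTop_atTop
  have h2 : Tendsto (fun N : ℕ => a/((N:ℝ)+c)) atTop (𝓝 0) :=
    Tendsto.div_atTop tendsto_const_nhds h1
  have h3 := (tendsto_const_nhds (x := (1:ℝ)) (f := atTop)).sub h2
  rw [sub_zero] at h3
  refine h3.congr fun N => ?_
  have hN : ((N:ℝ)+c) ≠ 0 := by positivity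
  field_simp

private lemma qchp_euler_div (a : ℝ) (ha : 0 < a) :
    Tendsto (fun n : ℕ => ∏ j ∈ range n, ((1:ℝ) - a^2/((j:ℝ)+1)^2)) atTop
      (𝓝 (Real.sin (π * a) / (π * a))) := by
  have hπa : π * a ≠ 0 := mul_ne_zero Real.pi_ne_zero (ne_of_gt ha)
  have hE := (Real.tendsto_euler_sin_prod a).const_mul (π*a)⁻¹
  rw [inv_mul_eq_div] at hE
  refine hE.congr fun n => ?_
  field_simp

end QuadraticClassHostAux

open Filter Topology Finset in
/-- `∏_{n ≥ 2} (1 - 1/(n(n+1))) = -2 sin(πφ)/π`, and it equals twice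
`∏_{n ≥ 2} (1 - 1/(n(n-1)))`. -/
theorem quadratic_class_host_product :
    ∏' n : ℕ, (1 - 1 / (((n : ℝ) + 2) * ((n : ℝ) + 3))) =
      -2 * Real.sin (π * ((1 + Real.sqrt 5) / 2)) / π ∧
    ∏' n : ℕ, (1 - 1 / (((n : ℝ) + 2) * ((n : ℝ) + 3))) =
      2 * ∏' n : ℕ, (1 - 1 / (((n : ℝ) + 2) * ((n : ℝ) + 1))) := by
  set a : ℝ := (1 + Real.sqrt 5) / 2 with ha_def
  have hs5 : Real.sqrt 5 ^ 2 = 5 := Real.sq_sqrt (by norm_num)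
  have hs5nn : (0:ℝ) ≤ Real.sqrt 5 := Real.sqrt_nonneg 5
  have hs5lb : (2:ℝ) < Real.sqrt 5 := by nlinarith
  have hs5ub : Real.sqrt 5 < 3 := by nlinarith
  have ha : a^2 = a + 1 := by rw [ha_def]; nlinarith
  have h1 : 1 < a := by rw [ha_def]; linarith
  have h2 : a < 2 := by rw [ha_def]; linarith
  clear_value a
  have ha0 : 0 < a := by linarith
  have hπ : (0:ℝ) < π := Real.pi_pos
  have hπ' : π ≠ 0 := ne_of_gt hπ
  have hna : (1:ℝ) - a^2 ≠ 0 := by nlinarith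
  have h2a : (2:ℝ) - a ≠ 0 := by linarith
  -- generic machinery: a positive product whose partial products converge
  have mach : ∀ (f : ℕ → ℝ), (∀ n, 1/2 ≤ f n) → (∀ n, f n ≤ 1) →
      Summable (fun n => 1 - f n) → ∀ L : ℝ,
      Tendsto (fun N => ∏ k ∈ range N, f k) atTop (𝓝 L) → ∏' n, f n = L := by
    intro f hlb hub hsum L hT
    have hpos : ∀ n, 0 < f n := fun n => lt_of_lt_of_le (by norm_num) (hlb n)
    have hlog := qchp_log_summable f hlb hub hsum
    have hprod : HasProd f (∏' n, f n) :=
      (Real.hasProd_of_hasSum_log hpos hlog.hasSum).multipliable.hasProd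
    exact tendsto_nhds_unique hprod.tendsto_prod_nat hT
  have hS := qchp_euler_div a ha0
  -- the first product
  have hP : ∏' n : ℕ, (1 - 1 / (((n : ℝ) + 2) * ((n : ℝ) + 3))) =
      -2 * Real.sin (π * a) / π := by
    refine mach _ (fun n => ?_) (fun n => ?_) ?_ _ ?_
    · have : 1 / (((n:ℝ)+2) * ((n:ℝ)+3)) ≤ 1/2 := by
        rw [div_le_div_iff₀ (by positivity) (by norm_num)]
        nlinarith [Nat.cast_nonneg (α := ℝ) n]
      linarith
    · have : (0:ℝ) ≤ 1 / (((n:ℝ)+2) * ((n:ℝ)+3)) := by positivity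
      linarith
    · have : Summable (fun n : ℕ => 1 / (((n:ℝ)+2) * ((n:ℝ)+3))) := by
        refine Summable.of_nonneg_of_le (fun n => by positivity) (fun n => ?_)
          qchp_base_summable
        rw [div_le_div_iff₀ (by positivity) (by positivity)]
        nlinarith [Nat.cast_nonneg (α := ℝ) n]
      simpa using this
    · have hT : Tendsto (fun N : ℕ =>
          (∏ j ∈ range (N+1), (1 - a^2/((j:ℝ)+1)^2)) * (2/((1-a^2)*(2-a)))
            * (((N:ℝ)+2-a)/((N:ℝ)+2))) atTop
          (𝓝 ((Real.sin (π*a) / (π*a)) * (2/((1-a^2)*(2-a))) * 1)) :=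
        ((hS.comp (tendsto_add_atTop_nat 1)).mul_const _).mul
          (qchp_tendsto_ratio a 2 (by norm_num))
      have hval : (Real.sin (π*a) / (π*a)) * (2/((1-a^2)*(2-a))) * 1 =
          -2 * Real.sin (π * a) / π := by
        have ha0' : a ≠ 0 := ne_of_gt ha0
        field_simp
        linear_combination (Real.sin (π*a)*(a^2 - a - 1)) * ha
      rw [← hval]
      exact hT.congr fun N => (qchp_closedP a ha h1 h2 N).symm
  -- the second product
  have hQ : ∏' n : ℕ, (1 - 1 / (((n : ℝ) + 2) * ((n : ℝ) + 1))) =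
      -Real.sin (π * a) / π := by
    refine mach _ (fun n => ?_) (fun n => ?_) ?_ _ ?_
    · have : 1 / (((n:ℝ)+2) * ((n:ℝ)+1)) ≤ 1/2 := by
        rw [div_le_div_iff₀ (by positivity) (by norm_num)]
        nlinarith [Nat.cast_nonneg (α := ℝ) n]
      linarith
    · have : (0:ℝ) ≤ 1 / (((n:ℝ)+2) * ((n:ℝ)+1)) := by positivity
      linarith
    · have : Summable (fun n : ℕ => 1 / (((n:ℝ)+2) * ((n:ℝ)+1))) := by
        refine Summable.of_nonneg_of_le (fun n => by positivity) (fun n => ?_)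
          qchp_base_summable
        rw [div_le_div_iff₀ (by positivity) (by positivity)]
        nlinarith [Nat.cast_nonneg (α := ℝ) n]
      simpa using this
    · have hT : Tendsto (fun N : ℕ =>
          (∏ j ∈ range N, (1 - a^2/((j:ℝ)+1)^2)) * ((1+a)/(1-a^2))
            * (((N:ℝ)+1-a)/((N:ℝ)+1))) atTop
          (𝓝 ((Real.sin (π*a) / (π*a)) * ((1+a)/(1-a^2)) * 1)) :=
        (hS.mul_const _).mul (qchp_tendsto_ratio a 1 (by norm_num))
      have hval : (Real.sin (π*a) / (π*a)) * ((1+a)/(1-a^2)) * 1 =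
          -Real.sin (π * a) / π := by
        have ha0' : a ≠ 0 := ne_of_gt ha0
        field_simp
        linear_combination (Real.sin (π*a)*(-a-1)) * ha
      rw [← hval]
      exact hT.congr fun N => (qchp_closedQ a ha h1 h2 N).symm
  refine ⟨hP, ?_⟩
  rw [hP, hQ]
  field_simp
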